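/- Let $(w_i)_{i=1}^n$ be real weights and $(X_i)_{i=1}^n$ real numbers, and let $\mu$ be a real function such that on each of $[0,\infty)$ and $(-\infty,0)$ it is twice differentiable with second derivative bounded in absolute value by $M$. Define $\tau = \mu(0^+)-\mu(0^-)$ (the jump of $\mu$ at $0$, where $\mu(0^+)=\mu(0)$). If the weights satisfy the local-linear exactness conditions $\sum_{i: X_i\ge 0} w_i = 1$, $\sum_{i: X_i<0} w_i = -1$, $\sum_{i: X_i\ge 0} w_i X_i = 0$, $\sum_{i: X_i<0} w_i X_i = 0$, then $\big|\sum_{i=1}^n w_i \mu(X_i) - \tau\big| \le \frac{M}{2}\sum_{i=1}^n |w_i| X_i^2$. -/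

import Mathlib

open Finset
open intervalIntegral in

lemma taylor1_bound (f : ℝ → ℝ) (M : ℝ) (hf : Differentiable ℝ f)
    (hf' : Differentiable ℝ (deriv f)) (hb : ∀ x, |deriv (deriv f) x| ≤ M) (x : ℝ) :
    |f x - f 0 - deriv f 0 * x| ≤ M / 2 * x ^ 2 := by
  have hM : 0 ≤ M := le_trans (abs_nonneg _) (hb 0)
  have hlip : ∀ t : ℝ, |deriv f t - deriv f 0| ≤ M * |t| := by
    intro t
    have := Convex.norm_image_sub_le_of_norm_deriv_le (f := deriv f) (s := Set.univ)
      (fun y _ => (hf' y)) (fun y _ => by simpa using hb y) convex_univ (Set.mem_univ 0)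
      (Set.mem_univ t)
    simpa using this
  have hcont : Continuous (deriv f) := hf'.continuous
  have hInt : ∀ a b : ℝ, IntervalIntegrable (fun t => deriv f t - deriv f 0) MeasureTheory.volume a b :=
    fun a b => (hcont.sub continuous_const).intervalIntegrable a b
  have key : ∫ t in (0:ℝ)..x, (deriv f t - deriv f 0) = f x - f 0 - deriv f 0 * x := by
    rw [intervalIntegral.integral_sub (hcont.intervalIntegrable 0 x)
      (intervalIntegrable_const)]
    rw [intervalIntegral.integral_deriv_eq_sub (fun t _ => hf t)
      (hcont.intervalIntegrable 0 x)]
    simp [mul_comm]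
  rw [← key]
  rcases le_or_gt 0 x with hx | hx
  · have hbd : ‖∫ t in (0:ℝ)..x, (deriv f t - deriv f 0)‖ ≤ |∫ t in (0:ℝ)..x, M * t| := by
      apply intervalIntegral.norm_integral_le_abs_of_norm_le
      · filter_upwards [MeasureTheory.ae_restrict_mem measurableSet_uIoc] with t ht
        rw [Set.uIoc_of_le hx] at ht
        have : |t| = t := abs_of_nonneg (le_of_lt ht.1)
        calc ‖deriv f t - deriv f 0‖ ≤ M * |t| := hlip t
          _ = M * t := by rw [this]
      · exact (continuous_const.mul continuous_id).intervalIntegrable 0 x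
    have heq : ∫ t in (0:ℝ)..x, M * t = M / 2 * x ^ 2 := by
      rw [intervalIntegral.integral_const_mul]
      simp [integral_id]
      ring
    rw [heq, abs_of_nonneg (by positivity)] at hbd
    exact hbd
  · have hflip : ∫ t in (0:ℝ)..x, (deriv f t - deriv f 0) = -∫ t in x..(0:ℝ), (deriv f t - deriv f 0) := by
      rw [intervalIntegral.integral_symm]
    rw [hflip, abs_neg]
    have hbd : ‖∫ t in x..(0:ℝ), (deriv f t - deriv f 0)‖ ≤ |∫ t in x..(0:ℝ), M * (-t)| := by
      apply intervalIntegral.norm_integral_le_abs_of_norm_le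
      · filter_upwards [MeasureTheory.ae_restrict_mem measurableSet_uIoc] with t ht
        rw [Set.uIoc_of_le hx.le] at ht
        have : |t| = -t := abs_of_nonpos ht.2
        calc ‖deriv f t - deriv f 0‖ ≤ M * |t| := hlip t
          _ = M * (-t) := by rw [this]
      · exact (continuous_const.mul continuous_neg).intervalIntegrable x 0
    have heq : ∫ t in x..(0:ℝ), M * (-t) = M / 2 * x ^ 2 := by
      have h' : ∀ t:ℝ, M * (-t) = -M * t := by intro t; ring
      simp_rw [h']
      rw [intervalIntegral.integral_const_mul]
      simp [integral_id]
      ring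
    rw [heq, abs_of_nonneg (by positivity)] at hbd
    exact hbd

/-- Worst-case conditional bias bound for a local-linear-type RD estimator over the
Hölder class of functions twice differentiable on each side of the cutoff with second
derivative bounded by `M`. -/
theorem stmt_0 (n : ℕ) (w X : Fin n → ℝ) (f0 f1 : ℝ → ℝ) (M : ℝ)
    (hf1 : Differentiable ℝ f1) (hf1' : Differentiable ℝ (deriv f1))
    (hb1 : ∀ x, |deriv (deriv f1) x| ≤ M)
    (hf0 : Differentiable ℝ f0) (hf0' : Differentiable ℝ (deriv f0))
    (hb0 : ∀ x, |deriv (deriv f0) x| ≤ M)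
    (μ : ℝ → ℝ) (hμ : ∀ x, μ x = if 0 ≤ x then f1 x else f0 x)
    (h1 : ∑ i ∈ univ.filter (fun i => 0 ≤ X i), w i = 1)
    (h2 : ∑ i ∈ univ.filter (fun i => X i < 0), w i = -1)
    (h3 : ∑ i ∈ univ.filter (fun i => 0 ≤ X i), w i * X i = 0)
    (h4 : ∑ i ∈ univ.filter (fun i => X i < 0), w i * X i = 0) :
    |∑ i, w i * μ (X i) - (f1 0 - f0 0)| ≤ M / 2 * ∑ i, |w i| * (X i) ^ 2 := by
  have hsplit : ∀ g : Fin n → ℝ, ∑ i, g i =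
      ∑ i ∈ univ.filter (fun i => 0 ≤ X i), g i
        + ∑ i ∈ univ.filter (fun i => X i < 0), g i := by
    intro g
    rw [← Finset.sum_filter_add_sum_filter_not univ (fun i => 0 ≤ X i)]
    congr 1
    apply Finset.sum_congr _ (fun _ _ => rfl)
    ext i
    simp [not_le]
  have hP : ∑ i ∈ univ.filter (fun i => 0 ≤ X i), w i * μ (X i)
      = (∑ i ∈ univ.filter (fun i => 0 ≤ X i),
          w i * (f1 (X i) - f1 0 - deriv f1 0 * X i)) + f1 0 := by
    have hterm : ∀ i ∈ univ.filter (fun i => 0 ≤ X i), w i * μ (X i)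
        = w i * (f1 (X i) - f1 0 - deriv f1 0 * X i) + f1 0 * w i
          + deriv f1 0 * (w i * X i) := by
      intro i hi
      rw [Finset.mem_filter] at hi
      rw [hμ, if_pos hi.2]; ring
    rw [Finset.sum_congr rfl hterm, Finset.sum_add_distrib, Finset.sum_add_distrib,
      ← Finset.mul_sum, ← Finset.mul_sum, h1, h3]
    ring
  have hN : ∑ i ∈ univ.filter (fun i => X i < 0), w i * μ (X i)
      = (∑ i ∈ univ.filter (fun i => X i < 0),
          w i * (f0 (X i) - f0 0 - deriv f0 0 * X i)) - f0 0 := by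
    have hterm : ∀ i ∈ univ.filter (fun i => X i < 0), w i * μ (X i)
        = w i * (f0 (X i) - f0 0 - deriv f0 0 * X i) + f0 0 * w i
          + deriv f0 0 * (w i * X i) := by
      intro i hi
      rw [Finset.mem_filter] at hi
      rw [hμ, if_neg (not_le.mpr hi.2)]; ring
    rw [Finset.sum_congr rfl hterm, Finset.sum_add_distrib, Finset.sum_add_distrib,
      ← Finset.mul_sum, ← Finset.mul_sum, h2, h4]
    ring
  rw [hsplit (fun i => w i * μ (X i)), hP, hN]
  have hrw : (∑ i ∈ univ.filter (fun i => 0 ≤ X i),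
          w i * (f1 (X i) - f1 0 - deriv f1 0 * X i)) + f1 0
      + ((∑ i ∈ univ.filter (fun i => X i < 0),
          w i * (f0 (X i) - f0 0 - deriv f0 0 * X i)) - f0 0) - (f1 0 - f0 0)
      = (∑ i ∈ univ.filter (fun i => 0 ≤ X i),
          w i * (f1 (X i) - f1 0 - deriv f1 0 * X i))
        + ∑ i ∈ univ.filter (fun i => X i < 0),
          w i * (f0 (X i) - f0 0 - deriv f0 0 * X i) := by ring
  rw [hrw]
  have hbound1 : |∑ i ∈ univ.filter (fun i => 0 ≤ X i),
      w i * (f1 (X i) - f1 0 - deriv f1 0 * X i)|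
      ≤ ∑ i ∈ univ.filter (fun i => 0 ≤ X i), |w i| * (M / 2 * X i ^ 2) := by
    refine (Finset.abs_sum_le_sum_abs _ _).trans (Finset.sum_le_sum fun i _ => ?_)
    rw [abs_mul]
    exact mul_le_mul_of_nonneg_left (taylor1_bound f1 M hf1 hf1' hb1 (X i)) (abs_nonneg _)
  have hbound0 : |∑ i ∈ univ.filter (fun i => X i < 0),
      w i * (f0 (X i) - f0 0 - deriv f0 0 * X i)|
      ≤ ∑ i ∈ univ.filter (fun i => X i < 0), |w i| * (M / 2 * X i ^ 2) := by
    refine (Finset.abs_sum_le_sum_abs _ _).trans (Finset.sum_le_sum fun i _ => ?_)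
    rw [abs_mul]
    exact mul_le_mul_of_nonneg_left (taylor1_bound f0 M hf0 hf0' hb0 (X i)) (abs_nonneg _)
  calc |_ + _| ≤ _ + _ := abs_add_le _ _
    _ ≤ (∑ i ∈ univ.filter (fun i => 0 ≤ X i), |w i| * (M / 2 * X i ^ 2))
        + ∑ i ∈ univ.filter (fun i => X i < 0), |w i| * (M / 2 * X i ^ 2) :=
      add_le_add hbound1 hbound0
    _ = M / 2 * ∑ i, |w i| * (X i) ^ 2 := by
      rw [← hsplit (fun i => |w i| * (M / 2 * X i ^ 2)), Finset.mul_sum]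
      exact Finset.sum_congr rfl fun i _ => by ring
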